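/- Let $Q \subseteq \mathbb{R}^d$ be a cube, $1 \le r \le p \le q < \infty$, $s \in (0,1)$, and let $\omega,\sigma$ be weights with $\sigma^{-1}\in L^{p'}(Q)$. Suppose there exists $C > 0$ such that for all $u \in F^{s,\sigma}_{p,r}(Q)$ one has $\|u-\langle u\rangle_Q\|_{L^{q,\infty}_\omega(Q)} \le C\,[u]_{F^{s,\sigma}_{p,r}(Q)}$ and $\frac{\omega^q(Q)^{1/q}}{|Q|}\|u-\langle u\rangle_Q\|_{L^1(Q)} \le C\,[u]_{F^{s,\sigma}_{p,r}(Q)}$. Then for all $u \in F^{s,\sigma}_{p,r}(Q)$, $\|u-\langle u\rangle_Q\|_{L^q_\omega(Q)} \le 58C\,[u]_{F^{s,\sigma}_{p,r}(Q)}$. -/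

import Mathlib

open MeasureTheory
open scoped ENNReal NNReal

noncomputable section

abbrev Euc (d : ℕ) := EuclideanSpace ℝ (Fin d)

structure Cube (d : ℕ) where
  center : Euc d
  side : ℝ
  side_pos : 0 < side

namespace Cube

variable {d : ℕ}

/-- A (half-open) axis-parallel cube in `ℝ^d`. -/
def toSet (Q : Cube d) : Set (Euc d) :=
  {x | ∀ i, Q.center i - Q.side / 2 ≤ x i ∧ x i < Q.center i + Q.side / 2}

/-- The volume `|Q| = ℓ(Q)^d` of a cube. -/
def vol (Q : Cube d) : ℝ := Q.side ^ d

/-- The average `⟨f⟩_Q = |Q|⁻¹ ∫_Q f`. -/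
def avg (Q : Cube d) (f : Euc d → ℝ) : ℝ := Q.vol⁻¹ * ∫ x in Q.toSet, f x

/-- The `ℝ≥0∞`-valued average of a nonnegative function. -/
def elavg (Q : Cube d) (g : Euc d → ℝ≥0∞) : ℝ≥0∞ :=
  (∫⁻ x in Q.toSet, g x) / ENNReal.ofReal Q.vol

/-- The `L^t`-average `⟨f⟩_{t,Q} = (|Q|⁻¹ ∫_Q |f|^t)^{1/t}`, with the
essential supremum when `t = ∞`. -/
def lavg (Q : Cube d) (t : ℝ≥0∞) (f : Euc d → ℝ) : ℝ≥0∞ :=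
  if t = ⊤ then essSup (fun x => ENNReal.ofReal |f x|) (volume.restrict Q.toSet)
  else ((∫⁻ x in Q.toSet, ENNReal.ofReal |f x| ^ t.toReal) / ENNReal.ofReal Q.vol) ^ (1 / t.toReal)

/-- The concentric dilation `γ Q` of a cube (only intended for `γ ≥ 1`). -/
def scale (γ : ℝ) (Q : Cube d) : Cube d :=
  ⟨Q.center, max γ 1 * Q.side,
    mul_pos (lt_of_lt_of_le one_pos (le_max_right γ 1)) Q.side_pos⟩

/-- The dyadic subcube of `Q` of generation `j` with index `k`. -/
def dyadicSub (Q : Cube d) (j : ℕ) (k : Fin d → ℕ) : Cube d where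
  center := WithLp.toLp 2 fun i => Q.center i - Q.side / 2 + ((k i : ℝ) + 1 / 2) * (Q.side / 2 ^ j)
  side := Q.side / 2 ^ j
  side_pos := div_pos Q.side_pos (by positivity)

/-- The `2ℓ(Q)`-periodic even reflection map: `reflect Q x ∈ Q` and functions
defined on `Q` are extended outside `Q` by precomposing with `reflect Q`. -/
def reflect (Q : Cube d) (x : Euc d) : Euc d := WithLp.toLp 2 fun i =>
  (Q.center i - Q.side / 2) + Q.side -
    |(x i - (Q.center i - Q.side / 2) -
        2 * Q.side * ((⌊(x i - (Q.center i - Q.side / 2)) / (2 * Q.side)⌋ : ℤ) : ℝ)) - Q.side|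

end Cube

/-- `R` is a dyadic subcube of `Q`. -/
def IsDyadicSub {d : ℕ} (Q R : Cube d) : Prop :=
  ∃ (j : ℕ) (k : Fin d → ℕ), (∀ i, k i < 2 ^ j) ∧ R = Q.dyadicSub j k

/-- A collection of cubes is sparse if each `R` carries a subset `E R ⊆ R`
with `|E R| ≥ |R|/2`, the sets `E R` being pairwise disjoint. -/
def IsSparse {d : ℕ} (𝒮 : Set (Cube d)) : Prop :=
  ∃ E : Cube d → Set (Euc d),
    (∀ R ∈ 𝒮, MeasurableSet (E R) ∧ E R ⊆ R.toSet ∧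
      ENNReal.ofReal R.vol ≤ 2 * volume (E R)) ∧
    𝒮.Pairwise fun R R' => Disjoint (E R) (E R')

/-- The Hölder conjugate `p'` of `p`, as an extended real exponent. -/
def conjE (p : ℝ) : ℝ≥0∞ := if p = 1 then ⊤ else ENNReal.ofReal (p / (p - 1))

/-- The two-weight Muckenhoupt characteristic
`[ω,σ]_{A^α_{p,q}(Q)} = sup_{R ⊆ Q} |R|^α ⟨ω⟩_{q,R} ⟨σ⁻¹⟩_{p',R}`. -/
def muck {d : ℕ} (Q : Cube d) (p q α : ℝ) (ω σ : Euc d → ℝ) : ℝ≥0∞ :=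
  ⨆ R : {R : Cube d // R.toSet ⊆ Q.toSet},
    ENNReal.ofReal (R.1.vol ^ α) * R.1.lavg (ENNReal.ofReal q) ω *
      R.1.lavg (conjE p) fun x => (σ x)⁻¹

/-- The classical Muckenhoupt `A_p` characteristic
`[w]_{A_p} = sup_Q ⟨w⟩_{1,Q} ⟨w⁻¹⟩_{1/(p-1),Q}` over all cubes in `ℝ^d`. -/
def apChar (d : ℕ) (p : ℝ) (w : Euc d → ℝ) : ℝ≥0∞ :=
  ⨆ R : Cube d,
    R.lavg 1 w * R.lavg (if p = 1 then ⊤ else ENNReal.ofReal (1 / (p - 1))) fun x => (w x)⁻¹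

/-- The localized maximal function `M(w 1_R)(x) = sup_{S ⊆ R, x ∈ S} ⟨w⟩_{1,S}`. -/
def locMaxFn {d : ℕ} (R : Cube d) (w : Euc d → ℝ) (x : Euc d) : ℝ≥0∞ :=
  ⨆ S : {S : Cube d // S.toSet ⊆ R.toSet ∧ x ∈ S.toSet}, S.1.lavg 1 w

/-- The local Fujii–Wilson `A_∞(Q)` characteristic. -/
def ainf {d : ℕ} (Q : Cube d) (w : Euc d → ℝ) : ℝ≥0∞ :=
  ⨆ R : {R : Cube d // R.toSet ⊆ Q.toSet},
    (∫⁻ x in R.1.toSet, locMaxFn R.1 w x) / ∫⁻ x in R.1.toSet, ENNReal.ofReal (w x)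

/-- The weighted norm `‖g‖_{L^p_σ(A)} = (∫_A |g|^p σ^p)^{1/p}` (weight as multiplier). -/
def wLp {d : ℕ} (A : Set (Euc d)) (p : ℝ) (σ g : Euc d → ℝ) : ℝ≥0∞ :=
  (∫⁻ x in A, ENNReal.ofReal (|g x| * σ x) ^ p) ^ (1 / p)

/-- The fractional difference quotient
`f^{s,r}_A(x) = (∫_A |f(x)-f(y)|^r / |x-y|^{d+sr} dy)^{1/r}`. -/
def fsr {d : ℕ} (A : Set (Euc d)) (s r : ℝ) (f : Euc d → ℝ) (x : Euc d) : ℝ≥0∞ :=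
  (∫⁻ y in A, ENNReal.ofReal |f x - f y| ^ r / edist x y ^ ((d : ℝ) + s * r)) ^ (1 / r)

/-- `f^{s,r}_{3R}`, where `f` is extended outside `Q` by periodic reflection. -/
def fsr3 {d : ℕ} (Q : Cube d) (s r : ℝ) (f : Euc d → ℝ) (R : Cube d) (x : Euc d) : ℝ≥0∞ :=
  fsr (Cube.scale 3 R).toSet s r (fun y => f (Q.reflect y)) x

/-- The weighted weak norm `‖g‖_{L^{q,∞}_ω(Q)}` of an `ℝ≥0∞`-valued function. -/
def weakNE {d : ℕ} (Q : Cube d) (q : ℝ) (ω : Euc d → ℝ) (g : Euc d → ℝ≥0∞) : ℝ≥0∞ :=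
  ⨆ lam : ℝ≥0, (lam : ℝ≥0∞) *
    (∫⁻ x in Q.toSet ∩ {x | (lam : ℝ≥0∞) < g x}, ENNReal.ofReal (ω x) ^ q) ^ (1 / q)

/-- The weighted weak norm `‖g‖_{L^{q,∞}_ω(Q)}` of a real valued function. -/
def weakN {d : ℕ} (Q : Cube d) (q : ℝ) (ω g : Euc d → ℝ) : ℝ≥0∞ :=
  weakNE Q q ω fun x => ENNReal.ofReal |g x|

/-- The weighted Triebel–Lizorkin seminorm `[u]_{F^{s,σ}_{p,r}(Q)}`. -/
def fSemi {d : ℕ} (Q : Cube d) (p r s : ℝ) (σ u : Euc d → ℝ) : ℝ≥0∞ :=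
  (∫⁻ x in Q.toSet, fsr Q.toSet s r u x ^ p * ENNReal.ofReal (σ x) ^ p) ^ (1 / p)

-- aux 1: tsum superadditivity of rpow
lemma aux_tsum_rpow {f : ℕ → ℝ≥0∞} {m : ℝ} (hm : 1 ≤ m) :
    ∑' k, f k ^ m ≤ (∑' k, f k) ^ m := by
  have h1 : ∀ s : Finset ℕ, ∑ k ∈ s, f k ^ m ≤ (∑ k ∈ s, f k) ^ m := by
    intro s
    induction s using Finset.cons_induction with
    | empty => simp [ENNReal.zero_rpow_of_pos (by linarith : (0:ℝ) < m)]
    | cons a s ha ih =>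
      rw [Finset.sum_cons, Finset.sum_cons]
      exact le_trans (add_le_add le_rfl ih) (ENNReal.add_rpow_le_rpow_add _ _ hm)
  rw [ENNReal.tsum_eq_iSup_sum (f := fun k => f k ^ m)]
  exact iSup_le fun s => (h1 s).trans
    (ENNReal.rpow_le_rpow (ENNReal.sum_le_tsum s) (by linarith))

-- aux 2: sup argument
lemma aux_ofReal_mul_le {B : ℝ} (hB : 0 < B) {w L : ℝ≥0∞}
    (h : ∀ b : ℝ≥0, (b : ℝ) < B → (b : ℝ≥0∞) * w ≤ L) :
    ENNReal.ofReal B * w ≤ L := by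
  rcases eq_or_ne w 0 with rfl | hw0
  · simp
  rcases eq_or_ne L ⊤ with rfl | hL
  · exact le_top
  have hwt : w ≠ ⊤ := by
    intro hwt
    have hb : ((B/2).toNNReal : ℝ) < B := by
      rw [Real.coe_toNNReal _ (by linarith)]; linarith
    have := h (B/2).toNNReal hb
    rw [hwt, ENNReal.mul_top (by
      simp [ENNReal.coe_eq_zero, Real.toNNReal_eq_zero]; linarith)] at this
    exact hL (top_le_iff.mp this)
  set wR := w.toReal with hwR
  have hwRpos : 0 < wR := ENNReal.toReal_pos hw0 hwt
  have hkey : B * wR ≤ L.toReal := by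
    by_contra hcon
    push_neg at hcon
    set b0 : ℝ := (L.toReal / wR + B) / 2 with hb0
    have hLw : L.toReal / wR < B := by
      rw [div_lt_iff₀ hwRpos]; linarith
    have hb0pos : 0 < b0 := by
      have : 0 ≤ L.toReal := ENNReal.toReal_nonneg
      have : 0 ≤ L.toReal / wR := by positivity
      simp only [hb0]; linarith
    have hb0B : b0 < B := by simp only [hb0]; linarith
    have hb0w : L.toReal < b0 * wR := by
      have : L.toReal / wR < b0 := by simp only [hb0]; linarith
      calc L.toReal = (L.toReal / wR) * wR := by field_simp
        _ < b0 * wR := by exact mul_lt_mul_of_pos_right this hwRpos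
    have := h b0.toNNReal (by rw [Real.coe_toNNReal _ hb0pos.le]; exact hb0B)
    have h2 : (b0.toNNReal : ℝ≥0∞) * w = ENNReal.ofReal (b0 * wR) := by
      rw [ENNReal.ofReal_mul hb0pos.le, hwR, ENNReal.ofReal_toReal hwt, ENNReal.ofReal]
    rw [h2] at this
    rw [ENNReal.ofReal_le_iff_le_toReal hL] at this
    linarith
  calc ENNReal.ofReal B * w = ENNReal.ofReal (B * wR) := by
        rw [ENNReal.ofReal_mul hB.le, hwR, ENNReal.ofReal_toReal hwt]
    _ ≤ L := by
        rw [ENNReal.ofReal_le_iff_le_toReal hL]; exact hkey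

/-- truncation of `z` at level `t` -/
private def clp (t z : ℝ) : ℝ := min (max (z - t) 0) t

private lemma clp_lip (t a b : ℝ) : |clp t a - clp t b| ≤ |a - b| := by
  unfold clp
  rcases le_total a b with h | h <;>
  · rw [abs_le]
    constructor <;>
    · simp only [min_def, max_def]
      split_ifs <;> cases abs_cases (a - b) <;> linarith

private lemma clp_mono {t a b : ℝ} (h : a ≤ b) : clp t a ≤ clp t b :=
  min_le_min (max_le_max (by linarith) le_rfl) le_rfl

private lemma clp_le (t a : ℝ) (ht : 0 ≤ t) : clp t a ≤ t := min_le_right _ _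

private lemma clp_nonneg (t a : ℝ) (ht : 0 ≤ t) : 0 ≤ clp t a :=
  le_min (le_max_right _ _) ht

private lemma clp_zero {t a : ℝ} (ht : 0 ≤ t) (h : a ≤ t) : clp t a = 0 := by
  unfold clp
  rw [max_eq_right (by linarith), min_eq_left ht]

private lemma clp_eq_t {t a : ℝ} (ht : 0 ≤ t) (h : 2 * t ≤ a) : clp t a = t := by
  unfold clp
  rw [max_eq_left (by linarith), min_eq_right (by linarith)]

private lemma clp_ge (t a : ℝ) : min (a - t) t ≤ clp t a :=
  min_le_min (le_max_left _ _) le_rfl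

/-- key bound: `clp t b - clp t a ≤ max (2t - a) 0` -/
private lemma clp_diff_le {t a b : ℝ} (ht : 0 ≤ t) :
    clp t b - clp t a ≤ max (2 * t - a) 0 := by
  have h1 := clp_le t b ht
  have h2 := clp_ge t a
  rcases le_total (a - t) t with h | h
  · rw [min_eq_left h] at h2
    exact le_trans (by linarith) (le_max_left _ _)
  · rw [min_eq_right h] at h2
    exact le_trans (by linarith) (le_max_right _ _)

private lemma key_sum {r lam a b : ℝ} (hr : 1 ≤ r) (hlam : 0 < lam)
    (ha : 0 ≤ a) (hab : a ≤ b) :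
    ∑' k : ℕ, ENNReal.ofReal (clp (2^(k+1)*lam) b - clp (2^(k+1)*lam) a) ^ r
      ≤ 4 * ENNReal.ofReal (b - a) ^ r := by
  have hr0 : (0:ℝ) < r := by linarith
  set t : ℕ → ℝ := fun k => 2^(k+1)*lam with ht
  have htpos : ∀ k, 0 < t k := fun k => by simp only [ht]; positivity
  have htmono : Monotone t := fun m n hmn => by
    simp only [ht]
    exact mul_le_mul_of_nonneg_right
      (pow_le_pow_right₀ one_le_two (by omega)) hlam.le
  have hc0 : ∀ k, 0 ≤ clp (t k) b - clp (t k) a := fun k => by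
    have := clp_mono (t := t k) hab; linarith
  have hcba : ∀ k, clp (t k) b - clp (t k) a ≤ b - a := fun k =>
    calc clp (t k) b - clp (t k) a ≤ |clp (t k) b - clp (t k) a| := le_abs_self _
      _ ≤ |b - a| := clp_lip _ _ _
      _ = b - a := abs_of_nonneg (by linarith)
  have hczero : ∀ k, b ≤ t k → clp (t k) b - clp (t k) a = 0 := fun k hb2 => by
    rw [clp_zero (htpos k).le hb2, clp_zero (htpos k).le (le_trans hab hb2)]; ring
  by_cases hb1 : b ≤ t 0
  · have hz : ∀ k : ℕ, ENNReal.ofReal (clp (t k) b - clp (t k) a) ^ r = 0 := fun k => by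
      rw [hczero k (le_trans hb1 (htmono (Nat.zero_le k)))]
      simp [ENNReal.zero_rpow_of_pos hr0]
    calc ∑' k : ℕ, ENNReal.ofReal (clp (t k) b - clp (t k) a) ^ r
        = 0 := by simp [hz]
      _ ≤ _ := zero_le
  · push_neg at hb1
    have hex : ∃ n : ℕ, b ≤ t n := by
      obtain ⟨n, hn⟩ := pow_unbounded_of_one_lt (b / lam) one_lt_two
      refine ⟨n, ?_⟩
      have : b < 2 ^ n * lam := by
        rw [div_lt_iff₀ hlam] at hn; linarith
      have h2 : (2:ℝ) ^ n * lam ≤ 2 ^ (n+1) * lam := by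
        have : (2:ℝ)^n ≤ 2^(n+1) := pow_le_pow_right₀ one_le_two (by omega)
        nlinarith
      simp only [ht]; linarith
    obtain ⟨K, hKle, hKmin⟩ : ∃ K, b ≤ t K ∧ ∀ m < K, ¬ b ≤ t m :=
      ⟨Nat.find hex, Nat.find_spec hex, fun m hm => Nat.find_min hex hm⟩
    have hK1 : 1 ≤ K := by
      rcases Nat.eq_zero_or_pos K with h0 | h0
      · subst h0; exact absurd hKle (not_le.mpr hb1)
      · exact h0
    obtain ⟨K', rfl⟩ : ∃ K', K = K' + 1 := ⟨K - 1, (Nat.succ_pred_eq_of_pos hK1).symm⟩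
    have h2K : 2^(K'+1) * lam < b := by
      have := hKmin K' (by omega)
      push_neg at this
      simpa only [ht] using this
    have htsum : ∑' k : ℕ, ENNReal.ofReal (clp (t k) b - clp (t k) a) ^ r
        = ∑ k ∈ Finset.range (K'+1), ENNReal.ofReal (clp (t k) b - clp (t k) a) ^ r := by
      apply tsum_eq_sum
      intro k hk
      rw [Finset.mem_range, not_lt] at hk
      rw [hczero k (le_trans hKle (htmono hk))]
      simp [ENNReal.zero_rpow_of_pos hr0]
    rw [htsum, Finset.sum_range_succ]
    have hlast : ENNReal.ofReal (clp (t K') b - clp (t K') a) ^ r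
        ≤ ENNReal.ofReal (b - a) ^ r :=
      ENNReal.rpow_le_rpow (ENNReal.ofReal_le_ofReal (hcba K')) hr0.le
    have hhead : ∑ k ∈ Finset.range K', ENNReal.ofReal (clp (t k) b - clp (t k) a) ^ r
        ≤ 2 * ENNReal.ofReal (b - a) ^ r := by
      have hterm : ∀ k ∈ Finset.range K',
          ENNReal.ofReal (clp (t k) b - clp (t k) a) ^ r
          ≤ (2⁻¹ : ℝ≥0∞) ^ (K' - 1 - k) * ENNReal.ofReal (b - a) ^ r := by
        intro k hk
        rw [Finset.mem_range] at hk
        set j := K' - 1 - k with hj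
        have hkj : k + 2 + j = K' + 1 := by omega
        have hθ : clp (t k) b - clp (t k) a ≤ (2⁻¹:ℝ)^j * (b - a) := by
          have h1 : clp (t k) b - clp (t k) a ≤ max (2 * t k - a) 0 :=
            clp_diff_le (htpos k).le
          have hpowe : (2:ℝ)^(k+2) * 2^j = 2^(K'+1) := by
            rw [← pow_add]; congr 1
          have hθb : (2:ℝ)^(k+2) * lam ≤ (2⁻¹:ℝ)^j * b := by
            have hbig : (2:ℝ)^(k+2) * lam ≤ (2⁻¹:ℝ)^j * (2^(K'+1) * lam) := by
              rw [← hpowe]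
              have : ((2:ℝ)⁻¹)^j * ((2:ℝ)^(k+2) * 2^j * lam)
                  = 2^(k+2) * lam * ((2⁻¹)^j * 2^j) := by ring
              rw [this, ← mul_pow]
              norm_num
            refine le_trans hbig ?_
            have hp : (0:ℝ) ≤ (2⁻¹:ℝ)^j := by positivity
            nlinarith [h2K]
          have hθa : (2⁻¹:ℝ)^j * a ≤ a := by
            have h1' : (2⁻¹:ℝ)^j ≤ 1 := pow_le_one₀ (by norm_num) (by norm_num)
            nlinarith
          have h2tk : 2 * t k = 2^(k+2) * lam := by simp only [ht]; ring
          have hmax : max (2 * t k - a) 0 ≤ (2⁻¹:ℝ)^j * (b - a) := by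
            apply max_le
            · rw [mul_sub]; linarith
            · have : (0:ℝ) ≤ b - a := by linarith
              positivity
          linarith
        calc ENNReal.ofReal (clp (t k) b - clp (t k) a) ^ r
            ≤ ENNReal.ofReal ((2⁻¹:ℝ)^j * (b-a)) ^ r :=
              ENNReal.rpow_le_rpow (ENNReal.ofReal_le_ofReal hθ) hr0.le
          _ = ENNReal.ofReal ((2⁻¹:ℝ)^j) ^ r * ENNReal.ofReal (b-a) ^ r := by
              rw [ENNReal.ofReal_mul (by positivity),
                ENNReal.mul_rpow_of_nonneg _ _ hr0.le]
          _ ≤ (2⁻¹ : ℝ≥0∞) ^ j * ENNReal.ofReal (b - a) ^ r := by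
              apply mul_le_mul_left
              have h1' : ENNReal.ofReal ((2⁻¹:ℝ)^j) = (2⁻¹ : ℝ≥0∞) ^ j := by
                rw [ENNReal.ofReal_pow (by norm_num), ENNReal.ofReal_inv_of_pos (by norm_num)]
                norm_num
              rw [h1', ← ENNReal.rpow_natCast (2⁻¹ : ℝ≥0∞) j, ← ENNReal.rpow_mul]
              apply ENNReal.rpow_le_rpow_of_exponent_ge (by
                simp [ENNReal.inv_le_one])
              nlinarith [Nat.cast_nonneg (α := ℝ) j]
      calc ∑ k ∈ Finset.range K', ENNReal.ofReal (clp (t k) b - clp (t k) a) ^ r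
          ≤ ∑ k ∈ Finset.range K', (2⁻¹ : ℝ≥0∞) ^ (K' - 1 - k) * ENNReal.ofReal (b - a) ^ r :=
            Finset.sum_le_sum hterm
        _ = (∑ k ∈ Finset.range K', (2⁻¹ : ℝ≥0∞) ^ (K' - 1 - k)) * ENNReal.ofReal (b - a) ^ r :=
            (Finset.sum_mul _ _ _).symm
        _ ≤ 2 * ENNReal.ofReal (b - a) ^ r := by
            apply mul_le_mul_left
            rw [Finset.sum_range_reflect (fun i => (2⁻¹ : ℝ≥0∞) ^ i) K']
            calc ∑ j ∈ Finset.range K', (2⁻¹ : ℝ≥0∞) ^ j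
                ≤ ∑' j : ℕ, (2⁻¹ : ℝ≥0∞) ^ j := ENNReal.sum_le_tsum _
              _ = 2 := by
                  rw [ENNReal.tsum_geometric, ENNReal.one_sub_inv_two, inv_inv]
    calc ∑ k ∈ Finset.range K', ENNReal.ofReal (clp (t k) b - clp (t k) a) ^ r
          + ENNReal.ofReal (clp (t K') b - clp (t K') a) ^ r
        ≤ 2 * ENNReal.ofReal (b - a) ^ r + ENNReal.ofReal (b - a) ^ r :=
          add_le_add hhead hlast
      _ = 3 * ENNReal.ofReal (b - a) ^ r := by ring
      _ ≤ 4 * ENNReal.ofReal (b - a) ^ r := by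
          apply mul_le_mul_left
          norm_num

private lemma key_sum_abs {r lam a b : ℝ} (hr : 1 ≤ r) (hlam : 0 < lam)
    (ha : 0 ≤ a) (hb : 0 ≤ b) :
    ∑' k : ℕ, ENNReal.ofReal |clp (2^(k+1)*lam) a - clp (2^(k+1)*lam) b| ^ r
      ≤ 4 * ENNReal.ofReal |a - b| ^ r := by
  rcases le_total a b with h | h
  · have he : ∀ k : ℕ, |clp (2^(k+1)*lam) a - clp (2^(k+1)*lam) b|
        = clp (2^(k+1)*lam) b - clp (2^(k+1)*lam) a := fun k => by
      rw [abs_sub_comm, abs_of_nonneg (by have := clp_mono (t := 2^(k+1)*lam) h; linarith)]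
    simp only [he]
    rw [abs_sub_comm, abs_of_nonneg (by linarith)]
    exact key_sum hr hlam ha h
  · have he : ∀ k : ℕ, |clp (2^(k+1)*lam) a - clp (2^(k+1)*lam) b|
        = clp (2^(k+1)*lam) a - clp (2^(k+1)*lam) b := fun k => by
      rw [abs_of_nonneg (by have := clp_mono (t := 2^(k+1)*lam) h; linarith)]
    simp only [he]
    rw [abs_of_nonneg (by linarith)]
    exact key_sum hr hlam hb h

/-- Proposition A.2, fractional weak implies strong: for
`1 ≤ r ≤ p ≤ q`, if the weak-type and average bounds with constant `C` hold for
every `u ∈ F^{s,σ}_{p,r}(Q)`, then the strong bound holds with constant `58 C`. -/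
theorem weak_implies_strong_fractional (d : ℕ) (Q : Cube d) (p q r s : ℝ)
    (hr : 1 ≤ r) (hrp : r ≤ p) (hpq : p ≤ q) (hs : 0 < s) (hs1 : s < 1)
    (ω σ : Euc d → ℝ) (hω : ∀ x, 0 < ω x) (hσ : ∀ x, 0 < σ x)
    (hωm : Measurable ω) (hσm : Measurable σ)
    (hσ' : Q.lavg (conjE p) (fun x => (σ x)⁻¹) ≠ ⊤)
    (C : ℝ) (hC : 0 < C)
    (hweak : ∀ u : Euc d → ℝ, Measurable u → IntegrableOn u Q.toSet →
        fSemi Q p r s σ u ≠ ⊤ →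
      weakN Q q ω (fun x => u x - Q.avg u) ≤ ENNReal.ofReal C * fSemi Q p r s σ u)
    (havg : ∀ u : Euc d → ℝ, Measurable u → IntegrableOn u Q.toSet →
        fSemi Q p r s σ u ≠ ⊤ →
      (∫⁻ x in Q.toSet, ENNReal.ofReal (ω x) ^ q) ^ (1 / q) / ENNReal.ofReal Q.vol *
          ENNReal.ofReal (∫ x in Q.toSet, |u x - Q.avg u|) ≤
        ENNReal.ofReal C * fSemi Q p r s σ u) :
    ∀ u : Euc d → ℝ, Measurable u → IntegrableOn u Q.toSet →
      fSemi Q p r s σ u ≠ ⊤ →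
      wLp Q.toSet q ω (fun x => u x - Q.avg u) ≤
        ENNReal.ofReal (58 * C) * fSemi Q p r s σ u := by
  intro u hu hui hF
  have hq0 : (0:ℝ) < q := by linarith
  have hp0 : (0:ℝ) < p := by linarith
  have hr0 : (0:ℝ) < r := by linarith
  have hvol : 0 < Q.vol := pow_pos Q.side_pos d
  -- finiteness of the cube volume
  have hQfin : volume Q.toSet < ⊤ := by
    have hsub : Q.toSet ⊆ Metric.closedBall Q.center (Real.sqrt (d * (Q.side/2)^2)) := by
      intro x hx
      rw [Metric.mem_closedBall, EuclideanSpace.dist_eq]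
      apply Real.sqrt_le_sqrt
      calc ∑ i, dist (x i) (Q.center i) ^ 2
          ≤ ∑ _i : Fin d, (Q.side/2)^2 := by
            apply Finset.sum_le_sum
            intro i _
            have h1 := (hx i).1
            have h2 := (hx i).2
            have h3 : |x i - Q.center i| ≤ Q.side/2 := abs_le.2 ⟨by linarith, by linarith⟩
            rw [Real.dist_eq]
            nlinarith [abs_nonneg (x i - Q.center i)]
        _ = d * (Q.side/2)^2 := by
            rw [Finset.sum_const, Finset.card_univ, Fintype.card_fin, nsmul_eq_mul]
    exact lt_of_le_of_lt (measure_mono hsub) measure_closedBall_lt_top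
  set c₀ := Q.avg u with hc₀
  set v : Euc d → ℝ := fun x => |u x - c₀| with hv
  have hvm : Measurable v := (hu.sub measurable_const).abs
  have hvnn : ∀ x, 0 ≤ v x := fun x => abs_nonneg _
  have hvint : IntegrableOn v Q.toSet :=
    (hui.sub (integrableOn_const hQfin.ne)).abs
  set lam := Q.vol⁻¹ * ∫ x in Q.toSet, v x with hlam
  have hlam0 : 0 ≤ lam :=
    mul_nonneg (inv_nonneg.2 hvol.le) (integral_nonneg fun x => abs_nonneg _)
  rcases eq_or_lt_of_le hlam0 with hlamz | hlamp
  · -- degenerate case: v = 0 a.e.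
    have hI0 : ∫ x in Q.toSet, v x = 0 := by
      by_contra hne
      have : 0 < ∫ x in Q.toSet, v x :=
        lt_of_le_of_ne (integral_nonneg fun x => abs_nonneg _) (Ne.symm hne)
      have : 0 < lam := by rw [hlam]; positivity
      linarith
    have hvz : ∀ᵐ x ∂(volume.restrict Q.toSet), v x = 0 := by
      have := (integral_eq_zero_iff_of_nonneg (fun x => hvnn x) hvint).1 hI0
      filter_upwards [this] with x hx using hx
    have hwz : wLp Q.toSet q ω (fun x => u x - Q.avg u) = 0 := by
      unfold wLp
      have : ∫⁻ x in Q.toSet, ENNReal.ofReal (|u x - Q.avg u| * ω x) ^ q = 0 := by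
        rw [← lintegral_zero (μ := volume.restrict Q.toSet)]
        apply lintegral_congr_ae
        filter_upwards [hvz] with x hx
        have : |u x - Q.avg u| = 0 := hx
        rw [this, zero_mul, ENNReal.ofReal_zero, ENNReal.zero_rpow_of_pos hq0]
      rw [this, ENNReal.zero_rpow_of_pos (by positivity)]
    rw [hwz]
    exact zero_le
  · -- main case
    set μQ := volume.restrict Q.toSet with hμQ
    set Ω : Euc d → ℝ≥0∞ := fun x => ENNReal.ofReal (ω x) ^ q with hΩ
    have hΩm : Measurable Ω :=
      ENNReal.continuous_rpow_const.measurable.comp (ENNReal.measurable_ofReal.comp hωm)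
    set F := fSemi Q p r s σ u with hFdef
    set CE := ENNReal.ofReal C with hCE
    set U : ℕ → Euc d → ℝ := fun k x => clp (2^(k+1)*lam) (v x) with hU
    have htk : ∀ k : ℕ, (0:ℝ) < 2^(k+1)*lam := fun k => by positivity
    have hUm : ∀ k, Measurable (U k) := by
      intro k
      have : U k = fun x => min (max (v x - 2^(k+1)*lam) 0) (2^(k+1)*lam) := rfl
      rw [this]
      exact ((hvm.sub measurable_const).max measurable_const).min measurable_const
    have hUnn : ∀ k x, 0 ≤ U k x := fun k x => clp_nonneg _ _ (htk k).le
    have hUle_v : ∀ k x, U k x ≤ v x := by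
      intro k x
      have : max (v x - 2^(k+1)*lam) 0 ≤ v x := max_le (by linarith [(htk k).le]) (hvnn x)
      exact le_trans (min_le_left _ _) this
    have hUint : ∀ k, IntegrableOn (U k) Q.toSet := by
      intro k
      apply hvint.mono' (hUm k).aestronglyMeasurable
      refine ae_of_all _ fun x => ?_
      rw [Real.norm_eq_abs, abs_of_nonneg (hUnn k x)]
      exact hUle_v k x
    have havgU : ∀ k, Q.avg (U k) ≤ lam := by
      intro k
      have hIle : ∫ x in Q.toSet, U k x ≤ ∫ x in Q.toSet, v x :=
        integral_mono (hUint k) hvint fun x => hUle_v k x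
      rw [hlam]
      unfold Cube.avg
      exact mul_le_mul_of_nonneg_left hIle (inv_nonneg.2 hvol.le)
    have hdiff : ∀ k (x y : Euc d), |U k x - U k y| ≤ |u x - u y| := by
      intro k x y
      refine (clp_lip _ _ _).trans ?_
      calc |v x - v y| ≤ |(u x - c₀) - (u y - c₀)| := abs_abs_sub_abs_le_abs_sub _ _
        _ = |u x - u y| := by rw [sub_sub_sub_cancel_right]
    have hfsr_mono : ∀ k x, fsr Q.toSet s r (U k) x ≤ fsr Q.toSet s r u x := by
      intro k x
      unfold fsr
      refine ENNReal.rpow_le_rpow (lintegral_mono fun y => ?_) (by positivity)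
      exact ENNReal.div_le_div_right
        (ENNReal.rpow_le_rpow (ENNReal.ofReal_le_ofReal (hdiff k x y)) hr0.le) _
    have hFk_le : ∀ k, fSemi Q p r s σ (U k) ≤ F := by
      intro k
      rw [hFdef]
      unfold fSemi
      refine ENNReal.rpow_le_rpow (lintegral_mono fun x => ?_) (by positivity)
      exact mul_le_mul_left (ENNReal.rpow_le_rpow (hfsr_mono k x) hp0.le) _
    have hFk_ne : ∀ k, fSemi Q p r s σ (U k) ≠ ⊤ := fun k =>
      ne_top_of_le_ne_top hF (hFk_le k)
    have hweakU : ∀ k, weakN Q q ω (fun x => U k x - Q.avg (U k))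
        ≤ CE * fSemi Q p r s σ (U k) := fun k => hweak (U k) (hUm k) (hUint k) (hFk_ne k)
    set WQ := ∫⁻ x in Q.toSet, Ω x with hWQ
    have havg' : ENNReal.ofReal lam * WQ ^ (1/q) ≤ CE * F := by
      have h := havg u hu hui hF
      have hIv : ∫ x in Q.toSet, |u x - Q.avg u| = Q.vol * lam := by
        rw [hlam]
        field_simp
        rfl
      rw [hIv] at h
      have hoV0 : ENNReal.ofReal Q.vol ≠ 0 := by
        simp only [ne_eq, ENNReal.ofReal_eq_zero, not_le]; linarith
      have hoVt : ENNReal.ofReal Q.vol ≠ ⊤ := ENNReal.ofReal_ne_top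
      calc ENNReal.ofReal lam * WQ ^ (1/q)
          = WQ ^ (1/q) / ENNReal.ofReal Q.vol * ENNReal.ofReal (Q.vol * lam) := by
            rw [ENNReal.ofReal_mul hvol.le, ENNReal.div_eq_inv_mul]
            have h2 : (ENNReal.ofReal Q.vol)⁻¹ * WQ ^ (1/q) *
                (ENNReal.ofReal Q.vol * ENNReal.ofReal lam)
                = ((ENNReal.ofReal Q.vol)⁻¹ * ENNReal.ofReal Q.vol) *
                  (ENNReal.ofReal lam * WQ ^ (1/q)) := by ring
            rw [h2, ENNReal.inv_mul_cancel hoV0 hoVt, one_mul]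
        _ ≤ CE * F := h
    -- the three main estimates
    have hsumFk : ∑' k, fSemi Q p r s σ (U k) ^ q ≤ ((4:ℝ≥0∞) * F) ^ q := by
      have hs1 : (1:ℝ) ≤ q/p := (one_le_div hp0).2 hpq
      have hs2 : (1:ℝ) ≤ p/r := (one_le_div hr0).2 hrp
      set σ' : Euc d → ℝ≥0∞ := fun x => ENNReal.ofReal (σ x) ^ p with hσ'd
      have hσ'm : Measurable σ' :=
        ENNReal.continuous_rpow_const.measurable.comp (ENNReal.measurable_ofReal.comp hσm)
      have hfsrm : ∀ (f : Euc d → ℝ), Measurable f →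
          Measurable fun x => fsr Q.toSet s r f x := by
        intro f hf
        unfold fsr
        apply ENNReal.continuous_rpow_const.measurable.comp
        apply Measurable.lintegral_prod_right'
          (f := fun z : Euc d × Euc d =>
            ENNReal.ofReal |f z.1 - f z.2| ^ r / edist z.1 z.2 ^ ((d:ℝ) + s*r))
        apply Measurable.div
        · exact ENNReal.continuous_rpow_const.measurable.comp
            (ENNReal.measurable_ofReal.comp (((hf.comp measurable_fst).sub
              (hf.comp measurable_snd)).abs))
        · exact ENNReal.continuous_rpow_const.measurable.comp measurable_edist
      have hpt : ∀ x, ∑' k, fsr Q.toSet s r (U k) x ^ p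
          ≤ (4:ℝ≥0∞) ^ (p/r) * fsr Q.toSet s r u x ^ p := by
        intro x
        have hIdef : ∀ (f : Euc d → ℝ), fsr Q.toSet s r f x ^ p
            = (∫⁻ y in Q.toSet, ENNReal.ofReal |f x - f y| ^ r /
                edist x y ^ ((d:ℝ) + s*r)) ^ (p/r) := by
          intro f
          unfold fsr
          rw [← ENNReal.rpow_mul, show (1/r)*p = p/r by ring]
        have huy : Measurable fun y => ENNReal.ofReal |u x - u y| ^ r /
            edist x y ^ ((d:ℝ) + s*r) := by
          apply Measurable.div
          · exact ENNReal.continuous_rpow_const.measurable.comp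
              (ENNReal.measurable_ofReal.comp ((measurable_const.sub hu).abs))
          · exact ENNReal.continuous_rpow_const.measurable.comp
              (measurable_const.edist measurable_id)
        simp only [hIdef]
        calc ∑' k, (∫⁻ y in Q.toSet, ENNReal.ofReal |U k x - U k y| ^ r /
                edist x y ^ ((d:ℝ) + s*r)) ^ (p/r)
            ≤ (∑' k, ∫⁻ y in Q.toSet, ENNReal.ofReal |U k x - U k y| ^ r /
                edist x y ^ ((d:ℝ) + s*r)) ^ (p/r) := aux_tsum_rpow hs2
          _ ≤ ((4:ℝ≥0∞) * ∫⁻ y in Q.toSet, ENNReal.ofReal |u x - u y| ^ r /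
                edist x y ^ ((d:ℝ) + s*r)) ^ (p/r) := by
              apply ENNReal.rpow_le_rpow _ (by positivity)
              calc ∑' k, ∫⁻ y in Q.toSet, ENNReal.ofReal |U k x - U k y| ^ r /
                    edist x y ^ ((d:ℝ) + s*r)
                  = ∫⁻ y in Q.toSet, ∑' k, ENNReal.ofReal |U k x - U k y| ^ r /
                    edist x y ^ ((d:ℝ) + s*r) := by
                    refine (lintegral_tsum fun k => Measurable.aemeasurable ?_).symm
                    apply Measurable.div
                    · exact ENNReal.continuous_rpow_const.measurable.comp
                        (ENNReal.measurable_ofReal.comp ((measurable_const.sub (hUm k)).abs))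
                    · exact ENNReal.continuous_rpow_const.measurable.comp
                        (measurable_const.edist measurable_id)
                _ ≤ ∫⁻ y in Q.toSet, (4 * ENNReal.ofReal |u x - u y| ^ r) /
                      edist x y ^ ((d:ℝ) + s*r) := by
                    apply lintegral_mono fun y => ?_
                    have hdd : ∑' k, ENNReal.ofReal |U k x - U k y| ^ r /
                        edist x y ^ ((d:ℝ) + s*r)
                        = (∑' k, ENNReal.ofReal |U k x - U k y| ^ r) /
                          edist x y ^ ((d:ℝ) + s*r) := by
                      simp only [div_eq_mul_inv]
                      exact ENNReal.tsum_mul_right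
                    rw [hdd]
                    apply ENNReal.div_le_div_right
                    calc ∑' k, ENNReal.ofReal |U k x - U k y| ^ r
                        ≤ 4 * ENNReal.ofReal |v x - v y| ^ r :=
                          key_sum_abs hr hlamp (hvnn x) (hvnn y)
                      _ ≤ 4 * ENNReal.ofReal |u x - u y| ^ r := by
                          apply mul_le_mul_right
                          apply ENNReal.rpow_le_rpow _ hr0.le
                          apply ENNReal.ofReal_le_ofReal
                          calc |v x - v y| ≤ |(u x - c₀) - (u y - c₀)| :=
                              abs_abs_sub_abs_le_abs_sub _ _
                            _ = |u x - u y| := by rw [sub_sub_sub_cancel_right]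
                _ = 4 * ∫⁻ y in Q.toSet, ENNReal.ofReal |u x - u y| ^ r /
                      edist x y ^ ((d:ℝ) + s*r) := by
                    rw [← lintegral_const_mul 4 huy]
                    apply lintegral_congr fun y => ?_
                    rw [mul_div_assoc]
          _ = (4:ℝ≥0∞) ^ (p/r) * (∫⁻ y in Q.toSet, ENNReal.ofReal |u x - u y| ^ r /
                edist x y ^ ((d:ℝ) + s*r)) ^ (p/r) :=
              ENNReal.mul_rpow_of_nonneg _ _ (by positivity)
      have hXdef : ∀ (f : Euc d → ℝ), fSemi Q p r s σ f ^ q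
          = (∫⁻ x in Q.toSet, fsr Q.toSet s r f x ^ p * σ' x) ^ (q/p) := by
        intro f
        unfold fSemi
        rw [← ENNReal.rpow_mul, show (1/p)*q = q/p by ring]
      simp only [hXdef]
      calc ∑' k, (∫⁻ x in Q.toSet, fsr Q.toSet s r (U k) x ^ p * σ' x) ^ (q/p)
          ≤ (∑' k, ∫⁻ x in Q.toSet, fsr Q.toSet s r (U k) x ^ p * σ' x) ^ (q/p) :=
            aux_tsum_rpow hs1
        _ ≤ ((4:ℝ≥0∞) ^ (p/r) * ∫⁻ x in Q.toSet, fsr Q.toSet s r u x ^ p * σ' x) ^ (q/p) := by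
            apply ENNReal.rpow_le_rpow _ (by positivity)
            calc ∑' k, ∫⁻ x in Q.toSet, fsr Q.toSet s r (U k) x ^ p * σ' x
                = ∫⁻ x in Q.toSet, ∑' k, fsr Q.toSet s r (U k) x ^ p * σ' x := by
                  exact (lintegral_tsum fun k => ((ENNReal.continuous_rpow_const.measurable.comp
                    (hfsrm (U k) (hUm k))).mul hσ'm).aemeasurable).symm
              _ ≤ ∫⁻ x in Q.toSet, ((4:ℝ≥0∞) ^ (p/r) * fsr Q.toSet s r u x ^ p) * σ' x := by
                  apply lintegral_mono fun x => ?_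
                  rw [ENNReal.tsum_mul_right]
                  exact mul_le_mul_left (hpt x) _
              _ = (4:ℝ≥0∞) ^ (p/r) * ∫⁻ x in Q.toSet, fsr Q.toSet s r u x ^ p * σ' x := by
                  simp_rw [mul_assoc]
                  exact lintegral_const_mul ((4:ℝ≥0∞) ^ (p/r))
                    ((ENNReal.continuous_rpow_const.measurable.comp (hfsrm u hu)).mul hσ'm)
        _ = ((4:ℝ≥0∞) ^ (p/r)) ^ (q/p) *
            ((∫⁻ x in Q.toSet, fsr Q.toSet s r u x ^ p * σ' x) ^ (q/p)) :=
            ENNReal.mul_rpow_of_nonneg _ _ (by positivity)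
        _ ≤ (4:ℝ≥0∞) ^ q * F ^ q := by
            apply mul_le_mul'
            · rw [← ENNReal.rpow_mul]
              apply ENNReal.rpow_le_rpow_of_exponent_le (by norm_num)
              have he : (p/r)*(q/p) = q/r := by
                field_simp
              rw [he]
              exact div_le_self hq0.le hr
            · exact le_of_eq (by rw [hFdef]; exact (hXdef u).symm)
        _ = ((4:ℝ≥0∞) * F) ^ q := (ENNReal.mul_rpow_of_nonneg _ _ hq0.le).symm
    have hMain : ∫⁻ x in Q.toSet, ENNReal.ofReal (v x) ^ q * Ω x
        ≤ (ENNReal.ofReal 4 * CE * F) ^ q + (ENNReal.ofReal 32 * CE * F) ^ q := by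
      set g : Euc d → ℝ≥0∞ := fun x => ENNReal.ofReal (v x) ^ q * Ω x with hg
      set A : Set (Euc d) := {x | v x ≤ 4*lam} with hA
      have hAm : MeasurableSet A := measurableSet_le hvm measurable_const
      have hsplit : ∫⁻ x, g x ∂μQ = (∫⁻ x in A, g x ∂μQ) + ∫⁻ x in Aᶜ, g x ∂μQ :=
        (lintegral_add_compl g hAm).symm
      have hP1 : ∫⁻ x in A, g x ∂μQ ≤ (ENNReal.ofReal 4 * CE * F) ^ q := by
        have hb : ∫⁻ x in A, g x ∂μQ
            ≤ ∫⁻ x in A, (ENNReal.ofReal (4*lam)) ^ q * Ω x ∂μQ := by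
          apply setLIntegral_mono (hΩm.const_mul _)
          intro x hx
          exact mul_le_mul_left
            (ENNReal.rpow_le_rpow (ENNReal.ofReal_le_ofReal hx) hq0.le) _
        refine hb.trans ?_
        rw [lintegral_const_mul _ hΩm]
        have hWle : ∫⁻ x in A, Ω x ∂μQ ≤ WQ := by
          rw [hWQ, hμQ, Measure.restrict_restrict hAm]
          exact lintegral_mono' (Measure.restrict_mono Set.inter_subset_right le_rfl) le_rfl
        calc (ENNReal.ofReal (4*lam)) ^ q * ∫⁻ x in A, Ω x ∂μQ
            ≤ (ENNReal.ofReal (4*lam)) ^ q * WQ := mul_le_mul_right hWle _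
          _ = (ENNReal.ofReal 4) ^ q * (ENNReal.ofReal lam * WQ ^ (1/q)) ^ q := by
              rw [ENNReal.ofReal_mul (by norm_num), ENNReal.mul_rpow_of_nonneg _ _ hq0.le,
                ENNReal.mul_rpow_of_nonneg _ _ hq0.le, ← ENNReal.rpow_mul,
                one_div_mul_cancel hq0.ne', ENNReal.rpow_one, mul_assoc]
          _ ≤ (ENNReal.ofReal 4) ^ q * (CE * F) ^ q :=
              mul_le_mul_right (ENNReal.rpow_le_rpow havg' hq0.le) _
          _ = (ENNReal.ofReal 4 * CE * F) ^ q := by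
              rw [mul_assoc, ← ENNReal.mul_rpow_of_nonneg _ _ hq0.le]
      have hcov : Aᶜ ⊆ ⋃ k : ℕ, {x | 2^(k+2)*lam < v x ∧ v x ≤ 2^(k+3)*lam} := by
        intro x hx
        have hx4 : 4*lam < v x := not_le.mp hx
        have hex : ∃ n : ℕ, v x ≤ 2^(n+3)*lam := by
          obtain ⟨n, hn⟩ := pow_unbounded_of_one_lt (v x / lam) one_lt_two
          refine ⟨n, ?_⟩
          rw [div_lt_iff₀ hlamp] at hn
          have h23 : (2:ℝ)^n ≤ 2^(n+3) := pow_le_pow_right₀ one_le_two (by omega)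
          nlinarith
        obtain ⟨k, hk, hkmin⟩ : ∃ k, (v x ≤ 2^(k+3)*lam) ∧ ∀ m < k, ¬ (v x ≤ 2^(m+3)*lam) :=
          ⟨Nat.find hex, Nat.find_spec hex, fun m hm => Nat.find_min hex hm⟩
        refine Set.mem_iUnion.2 ⟨k, ⟨?_, hk⟩⟩
        rcases Nat.eq_zero_or_pos k with rfl | hkpos
        · show 2^(0+2)*lam < v x
          norm_num
          linarith
        · have hm := hkmin (k-1) (by omega)
          push_neg at hm
          have he : k - 1 + 3 = k + 2 := by omega
          rwa [he] at hm
      have hshell : ∀ k : ℕ, ∫⁻ x in {x | 2^(k+2)*lam < v x ∧ v x ≤ 2^(k+3)*lam}, g x ∂μQ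
          ≤ (ENNReal.ofReal 8) ^ q * (CE * fSemi Q p r s σ (U k)) ^ q := by
        intro k
        set S := {x | 2^(k+2)*lam < v x ∧ v x ≤ 2^(k+3)*lam} with hS
        have hSm : MeasurableSet S := by
          have : S = {x | 2^(k+2)*lam < v x} ∩ {x | v x ≤ 2^(k+3)*lam} := rfl
          rw [this]
          exact (measurableSet_lt measurable_const hvm).inter
            (measurableSet_le hvm measurable_const)
        have hb1 : ∫⁻ x in S, g x ∂μQ
            ≤ (ENNReal.ofReal (2^(k+3)*lam)) ^ q * ∫⁻ x in S, Ω x ∂μQ := by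
          rw [← lintegral_const_mul _ hΩm]
          apply setLIntegral_mono (hΩm.const_mul _)
          intro x hx
          exact mul_le_mul_left
            (ENNReal.rpow_le_rpow (ENNReal.ofReal_le_ofReal hx.2) hq0.le) _
        set WS := ∫⁻ x in S, Ω x ∂μQ with hWS
        have hwk : ENNReal.ofReal (2^k*lam) * WS ^ (1/q)
            ≤ CE * fSemi Q p r s σ (U k) := by
          apply aux_ofReal_mul_le (by positivity)
          intro b hb
          have hincl : ∀ x ∈ S ∩ Q.toSet,
              x ∈ Q.toSet ∩ {x | (b:ℝ≥0∞) < ENNReal.ofReal |U k x - Q.avg (U k)|} := by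
            intro x hx
            refine ⟨hx.2, ?_⟩
            have hvx : 2^(k+2)*lam < v x := hx.1.1
            have hUx : U k x = 2^(k+1)*lam := by
              apply clp_eq_t (htk k).le
              have h22 : 2*(2^(k+1)*lam) = 2^(k+2)*lam := by ring
              linarith
            have habs : 2^k*lam ≤ |U k x - Q.avg (U k)| := by
              have h1 : Q.avg (U k) ≤ lam := havgU k
              have h2 : (2:ℝ)^k*lam + lam ≤ 2^(k+1)*lam := by
                have h2' : (2:ℝ)^(k+1) = 2*2^k := by ring
                nlinarith [hlamp, one_le_pow₀ (one_le_two (α := ℝ)) (n := k)]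
              calc (2:ℝ)^k*lam ≤ 2^(k+1)*lam - Q.avg (U k) := by linarith
                _ = U k x - Q.avg (U k) := by rw [hUx]
                _ ≤ |U k x - Q.avg (U k)| := le_abs_self _
            show (b:ℝ≥0∞) < ENNReal.ofReal |U k x - Q.avg (U k)|
            calc (b:ℝ≥0∞) = ENNReal.ofReal (b:ℝ) := ENNReal.ofReal_coe_nnreal.symm
              _ < ENNReal.ofReal |U k x - Q.avg (U k)| := by
                  have hpos : (0:ℝ) < |U k x - Q.avg (U k)| :=
                    lt_of_lt_of_le (by positivity) habs
                  exact (ENNReal.ofReal_lt_ofReal_iff hpos).2 (by linarith)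
          have hWSle : WS ≤ ∫⁻ x in Q.toSet ∩
              {x | (b:ℝ≥0∞) < ENNReal.ofReal |U k x - Q.avg (U k)|}, Ω x := by
            rw [hWS, hμQ, Measure.restrict_restrict hSm]
            exact lintegral_mono' (Measure.restrict_mono (fun x hx => hincl x hx) le_rfl) le_rfl
          calc (b:ℝ≥0∞) * WS ^ (1/q)
              ≤ (b:ℝ≥0∞) * (∫⁻ x in Q.toSet ∩
                  {x | (b:ℝ≥0∞) < ENNReal.ofReal |U k x - Q.avg (U k)|}, Ω x) ^ (1/q) :=
                mul_le_mul_right (ENNReal.rpow_le_rpow hWSle (by positivity)) _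
            _ ≤ weakN Q q ω (fun x => U k x - Q.avg (U k)) := by
                unfold weakN weakNE
                exact le_iSup (fun lam' : ℝ≥0 => (lam' : ℝ≥0∞) *
                  (∫⁻ x in Q.toSet ∩ {x | (lam' : ℝ≥0∞) <
                    ENNReal.ofReal |U k x - Q.avg (U k)|},
                      ENNReal.ofReal (ω x) ^ q) ^ (1/q)) b
            _ ≤ CE * fSemi Q p r s σ (U k) := hweakU k
        calc ∫⁻ x in S, g x ∂μQ
            ≤ (ENNReal.ofReal (2^(k+3)*lam)) ^ q * WS := hb1
          _ = (ENNReal.ofReal 8) ^ q * ((ENNReal.ofReal (2^k*lam)) ^ q * WS) := by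
              have h8 : (2:ℝ)^(k+3)*lam = 8*(2^k*lam) := by ring
              rw [h8, ENNReal.ofReal_mul (by norm_num),
                ENNReal.mul_rpow_of_nonneg _ _ hq0.le, mul_assoc]
          _ ≤ (ENNReal.ofReal 8) ^ q * (CE * fSemi Q p r s σ (U k)) ^ q := by
              apply mul_le_mul_right
              calc (ENNReal.ofReal (2^k*lam)) ^ q * WS
                  = (ENNReal.ofReal (2^k*lam) * WS ^ (1/q)) ^ q := by
                    rw [ENNReal.mul_rpow_of_nonneg _ _ hq0.le, ← ENNReal.rpow_mul,
                      one_div_mul_cancel hq0.ne', ENNReal.rpow_one]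
                _ ≤ (CE * fSemi Q p r s σ (U k)) ^ q := ENNReal.rpow_le_rpow hwk hq0.le
      have hP2 : ∫⁻ x in Aᶜ, g x ∂μQ ≤ (ENNReal.ofReal 32 * CE * F) ^ q := by
        have hstep1 : ∫⁻ x in Aᶜ, g x ∂μQ
            ≤ ∑' k : ℕ, ∫⁻ x in {x | 2^(k+2)*lam < v x ∧ v x ≤ 2^(k+3)*lam}, g x ∂μQ := by
          refine le_trans (lintegral_mono' (Measure.restrict_mono hcov le_rfl) le_rfl) ?_
          exact lintegral_iUnion_le _ _
        refine hstep1.trans ?_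
        calc ∑' k : ℕ, ∫⁻ x in {x | 2^(k+2)*lam < v x ∧ v x ≤ 2^(k+3)*lam}, g x ∂μQ
            ≤ ∑' k : ℕ, (ENNReal.ofReal 8) ^ q * (CE * fSemi Q p r s σ (U k)) ^ q :=
              ENNReal.tsum_le_tsum hshell
          _ = (ENNReal.ofReal 8) ^ q * CE ^ q * ∑' k, fSemi Q p r s σ (U k) ^ q := by
              simp_rw [ENNReal.mul_rpow_of_nonneg _ _ hq0.le, ← mul_assoc]
              rw [ENNReal.tsum_mul_left]
          _ ≤ (ENNReal.ofReal 8) ^ q * CE ^ q * ((4:ℝ≥0∞) * F) ^ q :=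
              mul_le_mul_right hsumFk _
          _ = (ENNReal.ofReal 32 * CE * F) ^ q := by
              have h4 : (4:ℝ≥0∞) = ENNReal.ofReal 4 := by simp
              have h32 : ENNReal.ofReal (32:ℝ) = ENNReal.ofReal 8 * ENNReal.ofReal 4 := by
                rw [← ENNReal.ofReal_mul (by norm_num)]; norm_num
              rw [h4, h32]
              simp only [ENNReal.mul_rpow_of_nonneg _ _ hq0.le]
              ring
      rw [hsplit] at *
      exact add_le_add hP1 hP2
    -- conclusion
    have hgoal : wLp Q.toSet q ω (fun x => u x - Q.avg u)
        = (∫⁻ x in Q.toSet, ENNReal.ofReal (v x) ^ q * Ω x) ^ (1/q) := by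
      unfold wLp
      congr 1
      apply lintegral_congr fun x => ?_
      rw [ENNReal.ofReal_mul (abs_nonneg _), ENNReal.mul_rpow_of_nonneg _ _ hq0.le]
    rw [hgoal]
    have h36 : (ENNReal.ofReal 4 * CE * F) ^ q + (ENNReal.ofReal 32 * CE * F) ^ q
        ≤ (ENNReal.ofReal (58 * C) * F) ^ q := by
      calc (ENNReal.ofReal 4 * CE * F) ^ q + (ENNReal.ofReal 32 * CE * F) ^ q
          ≤ (ENNReal.ofReal 4 * CE * F + ENNReal.ofReal 32 * CE * F) ^ q :=
            ENNReal.add_rpow_le_rpow_add _ _ (by linarith)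
        _ = ((ENNReal.ofReal 4 + ENNReal.ofReal 32) * CE * F) ^ q := by ring_nf
        _ ≤ (ENNReal.ofReal (58 * C) * F) ^ q := by
            apply ENNReal.rpow_le_rpow _ hq0.le
            apply mul_le_mul_left
            rw [← ENNReal.ofReal_add (by norm_num) (by norm_num), hCE,
              ← ENNReal.ofReal_mul (by norm_num)]
            exact ENNReal.ofReal_le_ofReal (by nlinarith)
    calc (∫⁻ x in Q.toSet, ENNReal.ofReal (v x) ^ q * Ω x) ^ (1/q)
        ≤ ((ENNReal.ofReal (58 * C) * F) ^ q) ^ (1/q) :=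
          ENNReal.rpow_le_rpow (le_trans hMain h36) (by positivity)
      _ = ENNReal.ofReal (58 * C) * F := by
          rw [← ENNReal.rpow_mul, mul_one_div_cancel hq0.ne', ENNReal.rpow_one]
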